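/- Let P_G(x) = ∏_{uv ∈ E(G), u < v} (x_u − x_v) be the graph polynomial of a finite graph G under a fixed linear order on vertices. Then an assignment c : V(G) → ℕ is a proper coloring of G if and only if P_G(c) ≠ 0. Consequently, if there is a monomial ∏_v x_v^{t_v} with nonzero coefficient in the expansion of P_G satisfying t_v < k for all v, then G is k-choosable. -/
import Mathlib


open MvPolynomial

/-- A graph is `k`-choosable if for every assignment of lists (of colors) of size `k`
to the vertices there is a proper coloring choosing each vertex's color from its list. -/
def Choosable {V : Type} (G : SimpleGraph V) (k : ℕ) : Prop :=
  ∀ L : V → Finset ℕ, (∀ v, (L v).card = k) →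
    ∃ c : V → ℕ, (∀ v, c v ∈ L v) ∧ ∀ u v, G.Adj u v → c u ≠ c v

/-- Leading coefficient of the Lagrange basis polynomial. -/
lemma coeff_lagrange_basis (S : Finset ℚ) (x : ℚ) (hx : x ∈ S) :
    (Lagrange.basis S id x).coeff (S.card - 1) = (∏ y ∈ S.erase x, (x - y))⁻¹ := by
  unfold Lagrange.basis Lagrange.basisDivisor
  simp only [id]
  rw [Finset.prod_mul_distrib, ← map_prod, Polynomial.coeff_C_mul, ← Lagrange.nodal_eq]
  have h1 : (Lagrange.nodal (S.erase x) (fun y => y)).coeff (S.card - 1) = 1 := by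
    have := Lagrange.nodal_monic (s := S.erase x) (v := (fun (y : ℚ) => y))
    have hd : (Lagrange.nodal (S.erase x) (fun (y : ℚ) => y)).natDegree = S.card - 1 := by
      rw [Lagrange.natDegree_nodal, Finset.card_erase_of_mem hx]
    rw [← hd]
    exact this
  rw [h1, mul_one, ← Finset.prod_inv_distrib]

/-- The key single-variable fact: weighted power sums over a finite node set. -/
lemma psi_eq (S : Finset ℚ) (d : ℕ) (hd : d < S.card) :
    (∑ x ∈ S, x ^ d * (∏ y ∈ S.erase x, (x - y))⁻¹)
      = if d = S.card - 1 then 1 else 0 := by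
  have hinj : Set.InjOn id (S : Set ℚ) := fun a _ b _ h => h
  have hXd : (Polynomial.X ^ d : Polynomial ℚ) = Lagrange.interpolate S id (fun x => x ^ d) := by
    refine Lagrange.eq_interpolate_of_eval_eq (F := ℚ) (ι := ℚ) (s := S) (v := id)
      (r := fun x => x ^ d) hinj ?_ ?_
    · rw [Polynomial.degree_X_pow]
      exact_mod_cast hd
    · intro i _; simp
  have h := congrArg (fun p : Polynomial ℚ => p.coeff (S.card - 1)) hXd
  simp only [Polynomial.coeff_X_pow] at h
  rw [Lagrange.interpolate_apply] at h
  rw [Polynomial.finset_sum_coeff] at h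
  have h2 : ∀ x ∈ S, (Polynomial.C (x ^ d) * Lagrange.basis S id x).coeff (S.card - 1)
      = x ^ d * (∏ y ∈ S.erase x, (x - y))⁻¹ := by
    intro x hx
    rw [Polynomial.coeff_C_mul, coeff_lagrange_basis S x hx]
  rw [Finset.sum_congr rfl h2] at h
  rw [← h]
  by_cases hc : d = S.card - 1 <;> simp [hc, eq_comm]

/-- Coefficient formula (a special case of the Combinatorial Nullstellensatz suited to
homogeneous polynomials): if all monomials of `P` have total degree `∑ v, t v` and
`S v` has `t v + 1` elements, then the coefficient of `x^t` in `P` is a weighted sum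
of the values of `P` on the grid `∏ S v`. -/
lemma coeff_eq_grid_sum {V : Type} [Fintype V] [DecidableEq V]
    (P : MvPolynomial V ℚ) (t : V →₀ ℕ) (S : V → Finset ℚ)
    (hS : ∀ v, (S v).card = t v + 1)
    (hdeg : ∀ d ∈ P.support, ∑ v, d v = ∑ v, t v) :
    P.coeff t = ∑ s ∈ Fintype.piFinset S,
      eval s P * ∏ v, (∏ y ∈ (S v).erase (s v), (s v - y))⁻¹ := by
  have hrw : ∀ s : V → ℚ, eval s P * ∏ v, (∏ y ∈ (S v).erase (s v), (s v - y))⁻¹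
      = ∑ d ∈ P.support, P.coeff d *
          ∏ v, (s v ^ d v * (∏ y ∈ (S v).erase (s v), (s v - y))⁻¹) := by
    intro s
    rw [eval_eq', Finset.sum_mul]
    refine Finset.sum_congr rfl fun d _ => ?_
    rw [mul_assoc, ← Finset.prod_mul_distrib]
  simp_rw [hrw]
  rw [Finset.sum_comm]
  have hterm : ∀ d ∈ P.support,
      (∑ s ∈ Fintype.piFinset S, P.coeff d *
        ∏ v, (s v ^ d v * (∏ y ∈ (S v).erase (s v), (s v - y))⁻¹))
      = P.coeff d * (if d = t then 1 else 0) := by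
    intro d hd
    rw [← Finset.mul_sum,
      ← Finset.prod_univ_sum S (fun v z => z ^ d v * (∏ y ∈ (S v).erase z, (z - y))⁻¹)]
    congr 1
    by_cases hdt : d = t
    · subst hdt
      rw [if_pos rfl]
      refine Finset.prod_eq_one fun v _ => ?_
      rw [psi_eq (S v) (d v) (by rw [hS v]; omega), if_pos (by rw [hS v]; omega)]
    · rw [if_neg hdt]
      have hne : ∃ v, d v < t v := by
        by_contra hcon
        push_neg at hcon
        apply hdt
        ext v
        have hsum := hdeg d hd
        by_contra hv
        have hlt : t v < d v := lt_of_le_of_ne (hcon v) (Ne.symm hv)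
        have : ∑ w, t w < ∑ w, d w :=
          Finset.sum_lt_sum (fun w _ => hcon w) ⟨v, Finset.mem_univ v, hlt⟩
        omega
      obtain ⟨v, hv⟩ := hne
      refine Finset.prod_eq_zero (Finset.mem_univ v) ?_
      rw [psi_eq (S v) (d v) (by rw [hS v]; omega), if_neg (by rw [hS v]; omega)]
  rw [Finset.sum_congr rfl hterm]
  by_cases ht : t ∈ P.support
  · rw [Finset.sum_eq_single t (fun d _ hd => by rw [if_neg hd, mul_zero])
      (fun h => absurd ht h), if_pos rfl, mul_one]
  · rw [MvPolynomial.notMem_support_iff.mp ht]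
    exact (Finset.sum_eq_zero fun d hd => by
      rw [if_neg (fun h => ht (by rw [← h]; exact hd)), mul_zero]).symm

/-- The graph polynomial `P_G(x) = ∏_{uv ∈ E, u < v} (x_u − x_v)` (with respect to a
fixed linear order on the vertices): an assignment `c : V → ℕ` is a proper coloring
of `G` iff `P_G(c) ≠ 0`; consequently, if some monomial `∏_v x_v^{t_v}` with all
exponents `t_v < k` has nonzero coefficient in `P_G`, then `G` is `k`-choosable. -/
theorem graph_polynomial_proper_coloring_iff_and_choosable
    {V : Type} [Fintype V] [LinearOrder V] (G : SimpleGraph V) [DecidableRel G.Adj]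
    (P : MvPolynomial V ℚ)
    (hP : P = ∏ p ∈ Finset.univ.filter (fun p : V × V => p.1 < p.2 ∧ G.Adj p.1 p.2),
      (X p.1 - X p.2)) :
    (∀ c : V → ℕ,
      ((∀ u v, G.Adj u v → c u ≠ c v) ↔ eval (fun v => (c v : ℚ)) P ≠ 0)) ∧
    (∀ k : ℕ, (∃ t : V →₀ ℕ, P.coeff t ≠ 0 ∧ ∀ v, t v < k) → Choosable G k) := by
  classical
  have h1 : ∀ c : V → ℕ,
      ((∀ u v, G.Adj u v → c u ≠ c v) ↔ eval (fun v => (c v : ℚ)) P ≠ 0) := by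
    intro c
    rw [hP, map_prod, Finset.prod_ne_zero_iff]
    constructor
    · intro h p hp
      simp only [Finset.mem_filter, Finset.mem_univ, true_and] at hp
      simp only [map_sub, eval_X]
      exact sub_ne_zero_of_ne (fun he => h p.1 p.2 hp.2 (Nat.cast_injective he))
    · intro h u v huv hc
      rcases lt_trichotomy u v with h' | h' | h'
      · have := h (u, v) (by simp [Finset.mem_filter, h', huv])
        simp only [map_sub, eval_X] at this
        exact this (by rw [hc]; ring)
      · exact G.ne_of_adj huv h'
      · have := h (v, u) (by simp [Finset.mem_filter, h', huv.symm])
        simp only [map_sub, eval_X] at this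
        exact this (by rw [hc]; ring)
  refine ⟨h1, ?_⟩
  rintro k ⟨t, ht, htk⟩ L hL
  -- homogeneity of the graph polynomial
  have hhom : P.IsHomogeneous
      (Finset.univ.filter (fun p : V × V => p.1 < p.2 ∧ G.Adj p.1 p.2)).card := by
    rw [hP]
    have := MvPolynomial.IsHomogeneous.prod
      (Finset.univ.filter (fun p : V × V => p.1 < p.2 ∧ G.Adj p.1 p.2))
      (fun p => X p.1 - X p.2) (fun _ => 1)
      (fun p _ => (isHomogeneous_X ℚ p.1).sub (isHomogeneous_X ℚ p.2))
    simpa using this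
  have hw : ∀ d : V →₀ ℕ, P.coeff d ≠ 0 →
      ∑ v, d v = (Finset.univ.filter (fun p : V × V => p.1 < p.2 ∧ G.Adj p.1 p.2)).card := by
    intro d hd
    have h := hhom hd
    rw [← h]
    simp [Finsupp.weight_apply, Finsupp.sum_fintype]
  have hdeg : ∀ d ∈ P.support, ∑ v, d v = ∑ v, t v := by
    intro d hd
    rw [hw d (MvPolynomial.mem_support_iff.mp hd), hw t ht]
  -- choose subsets of size t v + 1 from the lists
  have hsub : ∀ v, ∃ B ⊆ L v, B.card = t v + 1 := fun v =>
    Finset.exists_subset_card_eq (by rw [hL v]; exact htk v)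
  choose B hB hBcard using hsub
  set S : V → Finset ℚ := fun v => (B v).image (Nat.cast) with hSdef
  have hScard : ∀ v, (S v).card = t v + 1 := fun v => by
    rw [hSdef, Finset.card_image_of_injective _ Nat.cast_injective, hBcard v]
  have hsum := coeff_eq_grid_sum P t S hScard hdeg
  rw [hsum] at ht
  obtain ⟨s, hs, hs0⟩ := Finset.exists_ne_zero_of_sum_ne_zero ht
  have hmem : ∀ v, s v ∈ S v := fun v => (Fintype.mem_piFinset.mp hs) v
  have hc : ∀ v, ∃ n ∈ B v, (n : ℚ) = s v := fun v => by
    obtain ⟨n, hn, he⟩ := Finset.mem_image.mp (hmem v)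
    exact ⟨n, hn, he⟩
  choose c hcB hcs using hc
  refine ⟨c, fun v => hB v (hcB v), ?_⟩
  rw [h1 c]
  have hsc : (fun v => ((c v : ℚ))) = s := funext hcs
  rw [hsc]
  intro h0
  exact hs0 (by rw [h0, zero_mul])
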